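/- Let p be a proper sampling on [n], let A_1,…,A_n be real d×m matrices, φ_i : ℝ^m → ℝ differentiable, λ_i > 0, f_i(x) := φ_i(A_i^⊤ x), f := ∑_i λ_i f_i, and let v ∈ ℝ^n with v_i > 0 satisfy the ESO inequality: ∑_{C⊆[n]} p_C ‖∑_{i∈C} A_i h_i‖^2 ≤ ∑_{i=1}^n p_i v_i ‖h_i‖^2 for all h_1,…,h_n ∈ ℝ^m. Let x*, y* ∈ ℝ^d satisfy A_i^⊤ x* = A_i^⊤ y* for all i. Fix x ∈ ℝ^d and a_1,…,a_n ∈ ℝ^m, and define g(C) := ∑_{i=1}^n λ_i A_i a_i + ∑_{i∈C} (λ_i/p_i) A_i (∇φ_i(A_i^⊤ x) − a_i). Then ∑_{C⊆[n]} p_C ‖g(C) − ∇f(y*)‖^2 ≤ 2 ∑_{i=1}^n p_i^{-1} v_i λ_i^2 ‖∇φ_i(A_i^⊤ x) − ∇φ_i(A_i^⊤ x*)‖^2 + 2 ∑_{i=1}^n p_i^{-1} v_i λ_i^2 ‖a_i − ∇φ_i(A_i^⊤ x*)‖^2. -/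

import Mathlib

open Matrix

local notation "⟪" x ", " y "⟫" => @inner ℝ _ _ x y

-- gradient of φ ∘ (Aᵀ ·)
lemma aux_grad_comp {d m : ℕ} (A : Matrix (Fin d) (Fin m) ℝ)
    (φ : EuclideanSpace ℝ (Fin m) → ℝ) (hφ : Differentiable ℝ φ)
    (z : EuclideanSpace ℝ (Fin d)) :
    HasGradientAt (fun z => φ (Matrix.toEuclideanLin Aᵀ z))
      (Matrix.toEuclideanLin A (gradient φ (Matrix.toEuclideanLin Aᵀ z))) z := by
  set T : EuclideanSpace ℝ (Fin d) →L[ℝ] EuclideanSpace ℝ (Fin m) :=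
    LinearMap.toContinuousLinearMap (Matrix.toEuclideanLin Aᵀ) with hT
  have hTapp : ∀ w, T w = Matrix.toEuclideanLin Aᵀ w := fun w => rfl
  have hg : HasGradientAt φ (gradient φ (T z)) (T z) :=
    (hφ (T z)).hasGradientAt
  have hfd : HasFDerivAt φ ((InnerProductSpace.toDual ℝ _) (gradient φ (T z))) (T z) :=
    (hasGradientAt_iff_hasFDerivAt.mp hg)
  have hcomp : HasFDerivAt (fun z => φ (T z))
      (((InnerProductSpace.toDual ℝ _) (gradient φ (T z))).comp T) z :=
    hfd.comp z (T.hasFDerivAt)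
  rw [hasGradientAt_iff_hasFDerivAt]
  refine hcomp.congr_fderiv (Eq.symm ?_)
  ext h
  simp only [ContinuousLinearMap.coe_comp', Function.comp_apply,
    InnerProductSpace.toDual_apply_apply]
  show ⟪Matrix.toEuclideanLin A (gradient φ (Matrix.toEuclideanLin Aᵀ z)), h⟫
      = ⟪gradient φ (T z), T h⟫
  have hadj : Matrix.toEuclideanLin Aᵀ = LinearMap.adjoint (Matrix.toEuclideanLin A) := by
    rw [← Matrix.toEuclideanLin_conjTranspose_eq_adjoint,
      Matrix.conjTranspose_eq_transpose_of_trivial]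
  rw [show T h = LinearMap.adjoint (Matrix.toEuclideanLin A) h from by rw [hTapp, hadj],
    LinearMap.adjoint_inner_right, hTapp]

lemma aux_grad_sum {ι : Type*} [Fintype ι] {F : Type*} [NormedAddCommGroup F]
    [InnerProductSpace ℝ F] [CompleteSpace F] (f : ι → F → ℝ) (g : ι → F) (c : ι → ℝ) (x : F)
    (h : ∀ i, HasGradientAt (f i) (g i) x) :
    HasGradientAt (fun z => ∑ i, c i * f i z) (∑ i, c i • g i) x := by
  rw [hasGradientAt_iff_hasFDerivAt]
  have hs := HasFDerivAt.fun_sum (fun i (_ : i ∈ Finset.univ) =>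
    ((hasGradientAt_iff_hasFDerivAt.mp (h i)).const_mul (c i)))
  refine hs.congr_fderiv ?_
  simp [map_sum, _root_.map_smul]

lemma aux_var {ι : Type*} [Fintype ι] {F : Type*} [NormedAddCommGroup F]
    [InnerProductSpace ℝ F] (p : ι → ℝ) (hp1 : ∑ i, p i = 1)
    (Z : ι → F) (W : F) (hW : ∑ i, p i • Z i = W) :
    ∑ i, p i * ‖Z i - W‖ ^ 2 ≤ ∑ i, p i * ‖Z i‖ ^ 2 := by
  have expand : ∀ i, p i * ‖Z i - W‖ ^ 2
      = p i * ‖Z i‖ ^ 2 - 2 * (p i * ⟪Z i, W⟫) + p i * ‖W‖ ^ 2 := by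
    intro i
    rw [norm_sub_sq_real]; ring
  calc ∑ i, p i * ‖Z i - W‖ ^ 2
      = ∑ i, p i * ‖Z i‖ ^ 2 - 2 * ∑ i, p i * ⟪Z i, W⟫ + (∑ i, p i) * ‖W‖ ^ 2 := by
        simp_rw [expand]
        rw [Finset.sum_add_distrib, Finset.sum_sub_distrib, ← Finset.mul_sum,
          ← Finset.sum_mul]
    _ = ∑ i, p i * ‖Z i‖ ^ 2 - ‖W‖ ^ 2 := by
        have : ∑ i, p i * ⟪Z i, W⟫ = ‖W‖ ^ 2 := by
          have := sum_inner (𝕜 := ℝ) Finset.univ (fun i => p i • Z i) W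
          simp_rw [real_inner_smul_left] at this
          rw [← this, hW, real_inner_self_eq_norm_sq]
        rw [this, hp1]; ring
    _ ≤ ∑ i, p i * ‖Z i‖ ^ 2 := by nlinarith [sq_nonneg ‖W‖]

lemma aux_two {F : Type*} [NormedAddCommGroup F] (a b : F) :
    ‖a - b‖ ^ 2 ≤ 2 * ‖a‖ ^ 2 + 2 * ‖b‖ ^ 2 := by
  have h := norm_sub_le a b
  have h2 : ‖a - b‖ ^ 2 ≤ (‖a‖ + ‖b‖) ^ 2 := by
    apply pow_le_pow_left₀ (norm_nonneg _) h
  nlinarith [sq_nonneg (‖a‖ - ‖b‖)]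

lemma aux_swap {n : ℕ} {F : Type*} [NormedAddCommGroup F] [Module ℝ F]
    (p : Finset (Fin n) → ℝ) (pI : Fin n → ℝ)
    (hpI : ∀ i, pI i = ∑ C ∈ Finset.univ.filter (fun C => i ∈ C), p C)
    (y : Fin n → F) :
    ∑ C : Finset (Fin n), p C • ∑ i ∈ C, y i = ∑ i, pI i • y i := by
  calc ∑ C : Finset (Fin n), p C • ∑ i ∈ C, y i
      = ∑ C : Finset (Fin n), ∑ i : Fin n, if i ∈ C then p C • y i else 0 := by
        refine Finset.sum_congr rfl fun C _ => ?_
        rw [Finset.smul_sum]; symm; rw [Finset.sum_ite_mem, Finset.univ_inter]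
    _ = ∑ i : Fin n, ∑ C : Finset (Fin n), if i ∈ C then p C • y i else 0 :=
        Finset.sum_comm
    _ = ∑ i, pI i • y i := by
        refine Finset.sum_congr rfl fun i _ => ?_
        rw [hpI i, Finset.sum_smul, Finset.sum_filter]


/-- variance bound `E‖g − ∇f(y*)‖²` for the SAGA-AS gradient
estimate in the composite case, under the ESO inequality. -/
theorem stmt_12 (n d m : ℕ)
    (p : Finset (Fin n) → ℝ) (hp0 : ∀ C, 0 ≤ p C) (hp1 : ∑ C : Finset (Fin n), p C = 1)
    (pI : Fin n → ℝ) (hpI : ∀ i, pI i = ∑ C ∈ Finset.univ.filter (fun C => i ∈ C), p C)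
    (hproper : ∀ i, 0 < pI i)
    (A : Fin n → Matrix (Fin d) (Fin m) ℝ)
    (φ : Fin n → EuclideanSpace ℝ (Fin m) → ℝ)
    (hdiff : ∀ i, Differentiable ℝ (φ i))
    (lam : Fin n → ℝ) (hlam : ∀ i, 0 < lam i)
    (F : EuclideanSpace ℝ (Fin d) → ℝ)
    (hF : ∀ z, F z = ∑ i, lam i * φ i (Matrix.toEuclideanLin (A i)ᵀ z))
    (v : Fin n → ℝ) (hv : ∀ i, 0 < v i)
    (hESO : ∀ h : Fin n → EuclideanSpace ℝ (Fin m),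
        ∑ C : Finset (Fin n), p C * ‖∑ i ∈ C, Matrix.toEuclideanLin (A i) (h i)‖ ^ 2
          ≤ ∑ i, pI i * v i * ‖h i‖ ^ 2)
    (xstar ystar : EuclideanSpace ℝ (Fin d))
    (hns : ∀ i, Matrix.toEuclideanLin (A i)ᵀ xstar = Matrix.toEuclideanLin (A i)ᵀ ystar)
    (x : EuclideanSpace ℝ (Fin d)) (a : Fin n → EuclideanSpace ℝ (Fin m)) :
    ∑ C : Finset (Fin n), p C *
        ‖((∑ i, lam i • Matrix.toEuclideanLin (A i) (a i))
            + ∑ i ∈ C, (lam i / pI i) •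
                Matrix.toEuclideanLin (A i)
                  (gradient (φ i) (Matrix.toEuclideanLin (A i)ᵀ x) - a i))
          - gradient F ystar‖ ^ 2
      ≤ 2 * (∑ i, (pI i)⁻¹ * v i * lam i ^ 2 *
            ‖gradient (φ i) (Matrix.toEuclideanLin (A i)ᵀ x)
              - gradient (φ i) (Matrix.toEuclideanLin (A i)ᵀ xstar)‖ ^ 2)
        + 2 * ∑ i, (pI i)⁻¹ * v i * lam i ^ 2 *
            ‖a i - gradient (φ i) (Matrix.toEuclideanLin (A i)ᵀ xstar)‖ ^ 2 := by
  classical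
  set B : Fin n → EuclideanSpace ℝ (Fin m) →ₗ[ℝ] EuclideanSpace ℝ (Fin d) :=
    fun i => Matrix.toEuclideanLin (A i) with hB
  set s : Fin n → EuclideanSpace ℝ (Fin m) :=
    fun i => gradient (φ i) (Matrix.toEuclideanLin (A i)ᵀ xstar) with hs
  set gx : Fin n → EuclideanSpace ℝ (Fin m) :=
    fun i => gradient (φ i) (Matrix.toEuclideanLin (A i)ᵀ x) with hgx
  -- gradient of F
  have hFgrad : gradient F ystar = ∑ i, lam i • B i (s i) := by
    have hcomp : ∀ i, HasGradientAt (fun z => φ i (Matrix.toEuclideanLin (A i)ᵀ z))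
        (B i (gradient (φ i) (Matrix.toEuclideanLin (A i)ᵀ ystar))) ystar :=
      fun i => aux_grad_comp (A i) (φ i) (hdiff i) ystar
    have hsum := aux_grad_sum (fun i z => φ i (Matrix.toEuclideanLin (A i)ᵀ z))
      (fun i => B i (gradient (φ i) (Matrix.toEuclideanLin (A i)ᵀ ystar))) lam ystar hcomp
    have hFeq : F = fun z => ∑ i, lam i * φ i (Matrix.toEuclideanLin (A i)ᵀ z) :=
      funext hF
    rw [hFeq]
    have := hsum.gradient
    rw [this]
    refine Finset.sum_congr rfl fun i _ => ?_
    rw [hs]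
    simp only [← hns i]
  -- key vectors
  set u : Fin n → EuclideanSpace ℝ (Fin m) := fun i => lam i • (gx i - s i) with hu
  set w : Fin n → EuclideanSpace ℝ (Fin m) := fun i => lam i • (a i - s i) with hw
  set Zu : Finset (Fin n) → EuclideanSpace ℝ (Fin d) :=
    fun C => ∑ i ∈ C, (pI i)⁻¹ • B i (u i) with hZu
  set Zw : Finset (Fin n) → EuclideanSpace ℝ (Fin d) :=
    fun C => ∑ i ∈ C, (pI i)⁻¹ • B i (w i) with hZw
  set W : EuclideanSpace ℝ (Fin d) := ∑ i, B i (w i) with hW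
  -- pointwise identity
  have key : ∀ C : Finset (Fin n),
      ((∑ i, lam i • B i (a i)) + ∑ i ∈ C, (lam i / pI i) • B i (gx i - a i))
        - gradient F ystar = Zu C - (Zw C - W) := by
    intro C
    rw [hFgrad]
    have hterm : ∀ i, (lam i / pI i) • B i (gx i - a i)
        = (pI i)⁻¹ • B i (u i) - (pI i)⁻¹ • B i (w i) := by
      intro i
      have hne : pI i ≠ 0 := ne_of_gt (hproper i)
      simp only [hu, hw, map_sub, _root_.map_smul, div_eq_mul_inv]
      rw [smul_sub, smul_sub, smul_sub]
      module
    have hWeq : W = (∑ i, lam i • B i (a i)) - ∑ i, lam i • B i (s i) := by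
      rw [hW, ← Finset.sum_sub_distrib]
      refine Finset.sum_congr rfl fun i _ => ?_
      simp only [hw, _root_.map_smul, map_sub, smul_sub]
    simp only [hZu, hZw]
    rw [Finset.sum_congr rfl fun i _ => hterm i, Finset.sum_sub_distrib, hWeq]
    abel
  simp only [hB] at key ⊢
  rw [Finset.sum_congr rfl fun C _ => by rw [key C]]
  -- now bound
  have step2 : ∀ C : Finset (Fin n), p C * ‖Zu C - (Zw C - W)‖ ^ 2
      ≤ p C * (2 * ‖Zu C‖ ^ 2 + 2 * ‖Zw C - W‖ ^ 2) :=
    fun C => mul_le_mul_of_nonneg_left (aux_two _ _) (hp0 C)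
  have eso_u : ∑ C : Finset (Fin n), p C * ‖Zu C‖ ^ 2
      ≤ ∑ i, (pI i)⁻¹ * v i * lam i ^ 2 * ‖gx i - s i‖ ^ 2 := by
    have h1 := hESO (fun i => (pI i)⁻¹ • u i)
    simp only [_root_.map_smul] at h1
    refine le_trans h1 (le_of_eq (Finset.sum_congr rfl fun i _ => ?_))
    have hne : pI i ≠ 0 := ne_of_gt (hproper i)
    rw [hu]
    rw [norm_smul, norm_smul, mul_pow, mul_pow, Real.norm_eq_abs, Real.norm_eq_abs,
      sq_abs, sq_abs]
    field_simp
  have eso_w : ∑ C : Finset (Fin n), p C * ‖Zw C‖ ^ 2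
      ≤ ∑ i, (pI i)⁻¹ * v i * lam i ^ 2 * ‖a i - s i‖ ^ 2 := by
    have h1 := hESO (fun i => (pI i)⁻¹ • w i)
    simp only [_root_.map_smul] at h1
    refine le_trans h1 (le_of_eq (Finset.sum_congr rfl fun i _ => ?_))
    have hne : pI i ≠ 0 := ne_of_gt (hproper i)
    rw [hw]
    rw [norm_smul, norm_smul, mul_pow, mul_pow, Real.norm_eq_abs, Real.norm_eq_abs,
      sq_abs, sq_abs]
    field_simp
  have var_w : ∑ C : Finset (Fin n), p C * ‖Zw C - W‖ ^ 2
      ≤ ∑ C : Finset (Fin n), p C * ‖Zw C‖ ^ 2 := by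
    refine aux_var p hp1 Zw W ?_
    rw [hZw]
    rw [aux_swap p pI hpI (fun i => (pI i)⁻¹ • B i (w i))]
    rw [hW]
    refine Finset.sum_congr rfl fun i _ => ?_
    rw [smul_smul, mul_inv_cancel₀ (ne_of_gt (hproper i)), one_smul]
  calc ∑ C : Finset (Fin n), p C * ‖Zu C - (Zw C - W)‖ ^ 2
      ≤ ∑ C : Finset (Fin n), p C * (2 * ‖Zu C‖ ^ 2 + 2 * ‖Zw C - W‖ ^ 2) :=
        Finset.sum_le_sum fun C _ => step2 C
    _ = 2 * ∑ C : Finset (Fin n), p C * ‖Zu C‖ ^ 2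
        + 2 * ∑ C : Finset (Fin n), p C * ‖Zw C - W‖ ^ 2 := by
        rw [Finset.mul_sum, Finset.mul_sum, ← Finset.sum_add_distrib]
        refine Finset.sum_congr rfl fun C _ => ?_; ring
    _ ≤ 2 * (∑ i, (pI i)⁻¹ * v i * lam i ^ 2 * ‖gx i - s i‖ ^ 2)
        + 2 * ∑ i, (pI i)⁻¹ * v i * lam i ^ 2 * ‖a i - s i‖ ^ 2 := by
        have h2 := le_trans var_w eso_w
        linarith [eso_u]
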